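/- Let E and F be dyadic wavelet sets in ℝ with interpolation map σ_E^F. Then the following are equivalent: (i) (E, F) is an interpolation pair, i.e. σ_E^F ∘ σ_E^F = id_ℝ almost everywhere; (ii) σ_E^F(E ∪ F) ⊆ E ∪ F modulo Lebesgue-null sets. -/
import Mathlib


open MeasureTheory Set
open scoped Real symmDiff

noncomputable section

/-- An a.e. (modulo Lebesgue-null sets) partition of the set `A` by the family `P`. -/
def IsAEPartition {ι : Type*} (P : ι → Set ℝ) (A : Set ℝ) : Prop :=
  volume (A ∆ (⋃ i, P i)) = 0 ∧ ∀ i j : ι, i ≠ j → volume (P i ∩ P j) = 0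

/-- `E ⊆ ℝ` is a dyadic wavelet set: its `2πℤ`-translates and its `2ℤ`-dilates each
partition `ℝ` modulo Lebesgue-null sets. -/
def IsDyadicWaveletSet (E : Set ℝ) : Prop :=
  MeasurableSet E ∧
  (∀ᵐ x : ℝ ∂volume, ∃! n : ℤ, x + 2 * Real.pi * n ∈ E) ∧
  (∀ᵐ x : ℝ ∂volume, ∃! k : ℤ, (2 : ℝ) ^ k * x ∈ E)

/-- `σ` is (a representative of) the interpolation map `σ_E^F` for wavelet sets `E, F`. -/
def IsInterpolationMap (E F : Set ℝ) (σ : ℝ → ℝ) : Prop :=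
  Measurable σ ∧ σ 0 = 0 ∧
  (∀ᵐ s : ℝ ∂volume, s ∈ E → σ s ∈ F ∧ ∃ n : ℤ, σ s - s = 2 * Real.pi * n) ∧
  (∀ n : ℤ, ∀ᵐ s : ℝ ∂volume, (2 : ℝ) ^ (-n) * s ∈ E →
    σ s = (2 : ℝ) ^ n * σ ((2 : ℝ) ^ (-n) * s))

/-- The `2π`-congruence domain of a map `σ`. -/
def CongruenceDomain (σ : ℝ → ℝ) : Set ℝ :=
  {s : ℝ | ∃ n : ℤ, σ s - s = 2 * Real.pi * n}

/-- `A` is `2π`-translation congruent to `B`. -/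
def TransCongruent (A B : Set ℝ) : Prop :=
  ∃ P : ℤ → Set ℝ, (∀ n, MeasurableSet (P n)) ∧ IsAEPartition P A ∧
    IsAEPartition (fun (n : ℤ) => (fun x => x + 2 * Real.pi * (n : ℝ)) '' P n) B

/-- `A` is `2`-dilation congruent to `B`. -/
def DilCongruent (A B : Set ℝ) : Prop :=
  ∃ P : ℤ → Set ℝ, (∀ n, MeasurableSet (P n)) ∧ IsAEPartition P A ∧
    IsAEPartition (fun (n : ℤ) => (fun x => (2 : ℝ) ^ n * x) '' P n) B

namespace Stmt0Aux

def Phi (E F : Set ℝ) (σ : ℝ → ℝ) (x : ℝ) : Prop :=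
  (∃! n : ℤ, x + 2 * Real.pi * n ∈ E) ∧
  (∃! k : ℤ, (2 : ℝ) ^ k * x ∈ E) ∧
  (∃! n : ℤ, x + 2 * Real.pi * n ∈ F) ∧
  (∃! k : ℤ, (2 : ℝ) ^ k * x ∈ F) ∧
  (x ∈ E → σ x ∈ F ∧ ∃ n : ℤ, σ x - x = 2 * Real.pi * n) ∧
  (∀ n : ℤ, (2 : ℝ) ^ (-n) * x ∈ E → σ x = (2 : ℝ) ^ n * σ ((2 : ℝ) ^ (-n) * x))

def Psi (E F : Set ℝ) (σ : ℝ → ℝ) (x : ℝ) : Prop :=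
  ∀ l : ℤ, Phi E F σ ((2 : ℝ) ^ l * x)

lemma z1 (a b : ℤ) (x : ℝ) :
    (2 : ℝ) ^ a * ((2 : ℝ) ^ b * x) = (2 : ℝ) ^ (a + b) * x := by
  rw [← mul_assoc, ← zpow_add₀ (two_ne_zero) a b]

lemma zinv (k : ℤ) (x : ℝ) : (2 : ℝ) ^ (-k) * ((2 : ℝ) ^ k * x) = x := by
  rw [z1, neg_add_cancel, zpow_zero, one_mul]

lemma zinv' (k : ℤ) (x : ℝ) : (2 : ℝ) ^ k * ((2 : ℝ) ^ (-k) * x) = x := by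
  rw [z1, add_neg_cancel, zpow_zero, one_mul]

lemma Psi.self {E F : Set ℝ} {σ : ℝ → ℝ} {x : ℝ} (h : Psi E F σ x) : Phi E F σ x := by
  have := h 0
  rwa [zpow_zero, one_mul] at this

lemma two_zpow_cast {j : ℤ} (hj : 0 ≤ j) : (2 : ℝ) ^ j = (2 : ℝ) ^ j.toNat := by
  rw [← zpow_natCast (2 : ℝ), Int.toNat_of_nonneg hj]

lemma Psi.dilate {E F : Set ℝ} {σ : ℝ → ℝ} {x : ℝ} (h : Psi E F σ x) (l : ℤ) :
    Psi E F σ ((2 : ℝ) ^ l * x) := by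
  intro l'
  rw [z1]
  exact h (l' + l)

lemma ae_dilate (c : ℝ) (hc : c ≠ 0) {q : ℝ → Prop} (h : ∀ᵐ x : ℝ ∂volume, q x) :
    ∀ᵐ x : ℝ ∂volume, q (c * x) := by
  rw [ae_iff] at h ⊢
  have heq : {x : ℝ | ¬q (c * x)} = (c * ·) ⁻¹' {y : ℝ | ¬q y} := rfl
  rw [heq, Real.volume_preimage_mul_left hc, h, mul_zero]

lemma ae_sigma (σ : ℝ → ℝ)
    (hGood : ∀ᵐ x : ℝ ∂volume, ∃ m k : ℤ, σ x = x + 2 * Real.pi * m * (2 : ℝ) ^ k)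
    {q : ℝ → Prop} (h : ∀ᵐ y : ℝ ∂volume, q y) :
    ∀ᵐ x : ℝ ∂volume, q (σ x) := by
  have h2 : ∀ᵐ x : ℝ ∂volume,
      ∀ m k : ℤ, σ x = x + 2 * Real.pi * m * (2 : ℝ) ^ k → q (σ x) := by
    rw [ae_all_iff]; intro m; rw [ae_all_iff]; intro k
    have hpre : volume ((fun x : ℝ => x + 2 * Real.pi * m * (2 : ℝ) ^ k) ⁻¹'
        {y : ℝ | ¬q y}) = 0 :=
      (measurePreserving_add_right volume _).quasiMeasurePreserving.preimage_null (ae_iff.1 h)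
    rw [ae_iff]
    refine measure_mono_null ?_ hpre
    intro x hx
    simp only [Set.mem_setOf_eq, Classical.not_imp] at hx
    obtain ⟨hx1, hx2⟩ := hx
    show ¬ q (x + 2 * Real.pi * m * (2 : ℝ) ^ k)
    exact hx1 ▸ hx2
  filter_upwards [hGood, h2] with x hg h2x
  obtain ⟨m, k, hmk⟩ := hg
  exact h2x m k hmk

lemma good_of_psi {E F : Set ℝ} {σ : ℝ → ℝ} {x : ℝ} (h : Psi E F σ x) :
    ∃ m k : ℤ, σ x = x + 2 * Real.pi * m * (2 : ℝ) ^ k := by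
  obtain ⟨k₀, hk₀, -⟩ := h.self.2.1
  have h6 := h.self.2.2.2.2.2 (-k₀)
  rw [neg_neg] at h6
  have hσx : σ x = (2 : ℝ) ^ (-k₀) * σ ((2 : ℝ) ^ k₀ * x) := h6 hk₀
  obtain ⟨-, m, hm⟩ := (h k₀).2.2.2.2.1 hk₀
  refine ⟨m, -k₀, ?_⟩
  have hσt : σ ((2 : ℝ) ^ k₀ * x) = (2 : ℝ) ^ k₀ * x + 2 * Real.pi * m := by linarith
  rw [hσx, hσt, mul_add, zinv]
  ring


lemma keyF {E F : Set ℝ} {σ : ℝ → ℝ} {u : ℝ}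
    (hu : u ∈ F)
    (hΨu : Psi E F σ u)
    (hΨσ : ∀ l : ℤ, Psi E F σ (σ ((2 : ℝ) ^ l * u)))
    (hΨσσ : ∀ l : ℤ, Psi E F σ (σ (σ ((2 : ℝ) ^ l * u))))
    (hHu : u ∈ E ∪ F → σ u ∈ E ∪ F)
    (hHz : ∀ l : ℤ, σ ((2 : ℝ) ^ l * u) ∈ E ∪ F → σ (σ ((2 : ℝ) ^ l * u)) ∈ E ∪ F) :
    σ u ∈ E ∧ ∃ n : ℤ, σ u - u = 2 * Real.pi * n := by
  have hΦu : Phi E F σ u := hΨu.self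
  obtain ⟨j, hvE, -⟩ := hΦu.2.1
  have hσu : σ u = (2 : ℝ) ^ (-j) * σ ((2 : ℝ) ^ j * u) := by
    have := hΦu.2.2.2.2.2 (-j)
    rw [neg_neg] at this
    exact this hvE
  have hΦv : Phi E F σ ((2 : ℝ) ^ j * u) := hΨu j
  obtain ⟨hσvF, p, hp⟩ := hΦv.2.2.2.2.1 hvE
  have hσuEF : σ u ∈ E ∪ F := hHu (Or.inr hu)
  have hΨσu : Psi E F σ (σ u) := by
    have := hΨσ 0
    rwa [zpow_zero, one_mul] at this
  have hΦσu : Phi E F σ (σ u) := hΨσu.self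
  have hzw : (2 : ℝ) ^ j * σ u = σ ((2 : ℝ) ^ j * u) := by
    rw [hσu, zinv']
  rcases hσuEF with hσuE | hσuF
  · -- σ u ∈ E
    refine ⟨hσuE, ?_⟩
    have hdiff : σ u - u = (2 : ℝ) ^ (-j) * (2 * Real.pi * p) := by
      have hσv : σ ((2 : ℝ) ^ j * u) = (2 : ℝ) ^ j * u + 2 * Real.pi * p := by linarith
      rw [hσu, hσv, mul_add, zinv]
      ring
    rcases le_or_gt j 0 with hj | hj
    · -- j ≤ 0 : 2^(-j) is a nonnegative integer power of 2
      refine ⟨2 ^ (-j).toNat * p, ?_⟩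
      rw [hdiff, two_zpow_cast (by omega : (0:ℤ) ≤ -j)]
      push_cast
      ring
    · -- j > 0
      set v := (2 : ℝ) ^ j * u with hv
      set z := σ v with hz
      have hΦz : Phi E F σ z := (hΨσ j).self
      have h2mjz : (2 : ℝ) ^ (-j) * z = σ u := by rw [← hzw, zinv]
      have hσz : σ z = (2 : ℝ) ^ j * σ (σ u) := by
        have := hΦz.2.2.2.2.2 j
        rw [h2mjz] at this
        exact this hσuE
      obtain ⟨hσwF, q, hq⟩ := hΦσu.2.2.2.2.1 hσuE
      have hσzEF : σ z ∈ E ∪ F := hHz j (Or.inr hσvF)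
      have hA : (2 : ℝ) ^ j = (2 : ℝ) ^ j.toNat := two_zpow_cast hj.le
      rcases hσzEF with hσzE | hσzF
      · -- σ z ∈ E : translation uniqueness at v
        have h1 : σ (σ u) = σ u + 2 * Real.pi * q := by linarith
        have hzv : z = v + 2 * Real.pi * p := by
          have : z - v = 2 * Real.pi * p := hp
          linarith
        have hσz_eq : σ z = v + 2 * Real.pi * ((p + 2 ^ j.toNat * q : ℤ) : ℝ) := by
          have hc : σ z = z + 2 * Real.pi * ((2 : ℝ) ^ j.toNat * q) := by
            rw [hσz, h1, mul_add, hzw, hA]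
            ring
          rw [hc, hzv]
          push_cast
          ring
        have e1 : v + 2 * Real.pi * ((0 : ℤ) : ℝ) ∈ E := by simpa using hvE
        have e2 : v + 2 * Real.pi * ((p + 2 ^ j.toNat * q : ℤ) : ℝ) ∈ E := hσz_eq ▸ hσzE
        have hint : (0 : ℤ) = p + 2 ^ j.toNat * q := hΦv.1.unique e1 e2
        have hpz : p = -(2 ^ j.toNat * q) := by linarith [hint]
        have hp' : (p : ℝ) = -((2 : ℝ) ^ j.toNat * q) := by exact_mod_cast hpz
        refine ⟨-q, ?_⟩
        have hpow1 : (2 : ℝ) ^ (-j) * (2 : ℝ) ^ j.toNat = 1 := by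
          rw [← hA, ← zpow_add₀ (two_ne_zero : (2:ℝ) ≠ 0), neg_add_cancel, zpow_zero]
        rw [hdiff, hp']
        push_cast
        linear_combination (-(2 * Real.pi * (q : ℝ))) * hpow1
      · -- σ z ∈ F : contradiction with j > 0
        have hΦσz : Phi E F σ (σ z) := by
          have := (hΨσσ j).self
          rwa [← hv, ← hz] at this
        have f1 : (2 : ℝ) ^ (0 : ℤ) * σ z ∈ F := by
          rw [zpow_zero, one_mul]; exact hσzF
        have f2 : (2 : ℝ) ^ (-j) * σ z ∈ F := by
          rw [hσz, zinv]; exact hσwF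
        have : (0 : ℤ) = -j := hΦσz.2.2.2.1.unique f1 f2
        omega
  · -- σ u ∈ F : then j = 0, u ∈ E, σ u = u
    have f1 : (2 : ℝ) ^ (0 : ℤ) * σ u ∈ F := by rw [zpow_zero, one_mul]; exact hσuF
    have f2 : (2 : ℝ) ^ j * σ u ∈ F := by rw [hzw]; exact hσvF
    have hj0 : (0 : ℤ) = j := hΦσu.2.2.2.1.unique f1 f2
    have hvu : (2 : ℝ) ^ j * u = u := by rw [← hj0, zpow_zero, one_mul]
    rw [hvu] at hvE hp
    have hσueq : σ u = u + 2 * Real.pi * p := by linarith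
    have g1 : u + 2 * Real.pi * ((0 : ℤ) : ℝ) ∈ F := by simpa using hu
    have g2 : u + 2 * Real.pi * (p : ℝ) ∈ F := by rw [← hσueq]; exact hσuF
    have hp0 : (0 : ℤ) = p := hΦu.2.2.1.unique g1 g2
    have hσuu : σ u = u := by
      rw [hσueq, ← hp0]
      push_cast
      ring
    exact ⟨by rw [hσuu]; exact hvE, ⟨0, by rw [hσuu]; push_cast; ring⟩⟩

end Stmt0Aux

/-- Theorem 1 of the paper. For dyadic wavelet sets `E, F` with
interpolation map `σ = σ_E^F`, the pair `(E, F)` is an interpolation pair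
(`σ ∘ σ = id` a.e.) if and only if `σ(E ∪ F) ⊆ E ∪ F` modulo Lebesgue-null sets. -/
theorem stmt_0 (E F : Set ℝ) (hE : IsDyadicWaveletSet E) (hF : IsDyadicWaveletSet F)
    (σ : ℝ → ℝ) (hσ : IsInterpolationMap E F σ) :
    (∀ᵐ s : ℝ ∂volume, σ (σ s) = s) ↔ (∀ᵐ s : ℝ ∂volume, s ∈ E ∪ F → σ s ∈ E ∪ F) := by
  classical
  obtain ⟨hEmeas, hEtrans, hEdil⟩ := hE
  obtain ⟨hFmeas, hFtrans, hFdil⟩ := hF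
  obtain ⟨hσmeas, hσ0, hσEF, hσdil⟩ := hσ
  have hΦae : ∀ᵐ x : ℝ ∂volume, Stmt0Aux.Phi E F σ x := by
    have h6 : ∀ᵐ x : ℝ ∂volume, ∀ n : ℤ,
        (2 : ℝ) ^ (-n) * x ∈ E → σ x = (2 : ℝ) ^ n * σ ((2 : ℝ) ^ (-n) * x) :=
      ae_all_iff.2 hσdil
    filter_upwards [hEtrans, hEdil, hFtrans, hFdil, hσEF, h6] with x h1 h2 h3 h4 h5 h6x
    exact ⟨h1, h2, h3, h4, h5, h6x⟩
  have hΨae : ∀ᵐ x : ℝ ∂volume, Stmt0Aux.Psi E F σ x := by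
    have hall : ∀ᵐ x : ℝ ∂volume, ∀ l : ℤ, Stmt0Aux.Phi E F σ ((2 : ℝ) ^ l * x) := by
      rw [ae_all_iff]
      intro l
      exact Stmt0Aux.ae_dilate _ (zpow_ne_zero l two_ne_zero) hΦae
    exact hall
  have hGood : ∀ᵐ x : ℝ ∂volume, ∃ m k : ℤ, σ x = x + 2 * Real.pi * m * (2 : ℝ) ^ k := by
    filter_upwards [hΨae] with x hx using Stmt0Aux.good_of_psi hx
  have hΨσae : ∀ᵐ x : ℝ ∂volume, Stmt0Aux.Psi E F σ (σ x) := Stmt0Aux.ae_sigma σ hGood hΨae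
  constructor
  · -- interpolation pair → σ(E∪F) ⊆ E∪F a.e.
    intro H
    filter_upwards [hΨae, hΨσae, H] with x hΨx hΨσx hxx hmem
    rcases hmem with hxE | hxF
    · exact Or.inr (hΨx.self.2.2.2.2.1 hxE).1
    · obtain ⟨k, hwE, -⟩ := hΨσx.self.2.1
      have hσy : σ (σ x) = (2 : ℝ) ^ (-k) * σ ((2 : ℝ) ^ k * σ x) := by
        have := hΨσx.self.2.2.2.2.2 (-k)
        rw [neg_neg] at this
        exact this hwE
      have hσwF : σ ((2 : ℝ) ^ k * σ x) ∈ F := ((hΨσx k).2.2.2.2.1 hwE).1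
      have h2kx : (2 : ℝ) ^ k * x = σ ((2 : ℝ) ^ k * σ x) := by
        have h' : (2 : ℝ) ^ k * σ (σ x) = σ ((2 : ℝ) ^ k * σ x) := by
          rw [hσy, Stmt0Aux.zinv']
        rwa [hxx] at h'
      have f1 : (2 : ℝ) ^ (0 : ℤ) * x ∈ F := by rw [zpow_zero, one_mul]; exact hxF
      have f2 : (2 : ℝ) ^ k * x ∈ F := by rw [h2kx]; exact hσwF
      have hk0 : (0 : ℤ) = k := hΨx.self.2.2.2.1.unique f1 f2
      refine Or.inl ?_
      rw [← hk0, zpow_zero, one_mul] at hwE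
      exact hwE
  · -- σ(E∪F) ⊆ E∪F a.e. → interpolation pair
    intro H
    have hH2 : ∀ᵐ x : ℝ ∂volume, ∀ l : ℤ,
        ((2 : ℝ) ^ l * σ x ∈ E ∪ F → σ ((2 : ℝ) ^ l * σ x) ∈ E ∪ F) := by
      rw [ae_all_iff]; intro l
      exact Stmt0Aux.ae_sigma σ hGood (Stmt0Aux.ae_dilate _ (zpow_ne_zero l two_ne_zero) H)
    have hΨσ2 : ∀ᵐ x : ℝ ∂volume, ∀ l : ℤ,
        Stmt0Aux.Psi E F σ (σ ((2 : ℝ) ^ l * σ x)) := by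
      rw [ae_all_iff]; intro l
      exact Stmt0Aux.ae_sigma σ hGood
        (Stmt0Aux.ae_dilate _ (zpow_ne_zero l two_ne_zero) hΨσae)
    have hΨσσ2 : ∀ᵐ x : ℝ ∂volume, ∀ l : ℤ,
        Stmt0Aux.Psi E F σ (σ (σ ((2 : ℝ) ^ l * σ x))) := by
      rw [ae_all_iff]; intro l
      exact Stmt0Aux.ae_sigma σ hGood
        (Stmt0Aux.ae_dilate _ (zpow_ne_zero l two_ne_zero)
          (Stmt0Aux.ae_sigma σ hGood hΨσae))
    have hH3 : ∀ᵐ x : ℝ ∂volume, ∀ l : ℤ,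
        (σ ((2 : ℝ) ^ l * σ x) ∈ E ∪ F → σ (σ ((2 : ℝ) ^ l * σ x)) ∈ E ∪ F) := by
      rw [ae_all_iff]; intro l
      exact Stmt0Aux.ae_sigma σ hGood
        (Stmt0Aux.ae_dilate _ (zpow_ne_zero l two_ne_zero)
          (Stmt0Aux.ae_sigma σ hGood H))
    filter_upwards [hΨae, hΨσae, hH2, hΨσ2, hΨσσ2, hH3] with x hΨx hΨσx hH2x hΨσ2x hΨσσ2x hH3x
    obtain ⟨k, htE, -⟩ := hΨx.self.2.1
    have hσx : σ x = (2 : ℝ) ^ (-k) * σ ((2 : ℝ) ^ k * x) := by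
      have := hΨx.self.2.2.2.2.2 (-k)
      rw [neg_neg] at this
      exact this htE
    have hut : (2 : ℝ) ^ k * σ x = σ ((2 : ℝ) ^ k * x) := by
      rw [hσx, Stmt0Aux.zinv']
    obtain ⟨huF, m, hm⟩ := (hΨx k).2.2.2.2.1 htE
    have hu : (2 : ℝ) ^ k * σ x ∈ F := by rw [hut]; exact huF
    have hΨu : Stmt0Aux.Psi E F σ ((2 : ℝ) ^ k * σ x) := hΨσx.dilate k
    have hΨσl : ∀ l : ℤ, Stmt0Aux.Psi E F σ (σ ((2 : ℝ) ^ l * ((2 : ℝ) ^ k * σ x))) := by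
      intro l
      rw [Stmt0Aux.z1]
      exact hΨσ2x (l + k)
    have hΨσσl : ∀ l : ℤ, Stmt0Aux.Psi E F σ (σ (σ ((2 : ℝ) ^ l * ((2 : ℝ) ^ k * σ x)))) := by
      intro l
      rw [Stmt0Aux.z1]
      exact hΨσσ2x (l + k)
    have hHzl : ∀ l : ℤ, σ ((2 : ℝ) ^ l * ((2 : ℝ) ^ k * σ x)) ∈ E ∪ F →
        σ (σ ((2 : ℝ) ^ l * ((2 : ℝ) ^ k * σ x))) ∈ E ∪ F := by
      intro l
      rw [Stmt0Aux.z1]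
      exact hH3x (l + k)
    obtain ⟨hσuE, n', hn'⟩ := Stmt0Aux.keyF hu hΨu hΨσl hΨσσl (hH2x k) hHzl
    rw [hut] at hσuE hn'
    -- σ (σ (2^k x)) = 2^k x
    have e1 : (2 : ℝ) ^ k * x + 2 * Real.pi * ((0 : ℤ) : ℝ) ∈ E := by simpa using htE
    have hσσT : σ (σ ((2 : ℝ) ^ k * x)) = (2 : ℝ) ^ k * x + 2 * Real.pi * ((m + n' : ℤ) : ℝ) := by
      push_cast
      linarith
    have e2 : (2 : ℝ) ^ k * x + 2 * Real.pi * ((m + n' : ℤ) : ℝ) ∈ E := by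
      rw [← hσσT]; exact hσuE
    have hmn : (0 : ℤ) = m + n' := (hΨx k).1.unique e1 e2
    have hfix : σ (σ ((2 : ℝ) ^ k * x)) = (2 : ℝ) ^ k * x := by
      rw [hσσT, ← hmn]
      push_cast
      ring
    -- now compute σ (σ x)
    obtain ⟨j, hvE, -⟩ := hΨu.self.2.1
    have hσu6 : σ ((2 : ℝ) ^ k * σ x) =
        (2 : ℝ) ^ (-j) * σ ((2 : ℝ) ^ j * ((2 : ℝ) ^ k * σ x)) := by
      have := hΨu.self.2.2.2.2.2 (-j)
      rw [neg_neg] at this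
      exact this hvE
    have hvT : (2 : ℝ) ^ j * σ ((2 : ℝ) ^ k * σ x) =
        σ ((2 : ℝ) ^ j * ((2 : ℝ) ^ k * σ x)) := by
      rw [hσu6, Stmt0Aux.zinv']
    rw [Stmt0Aux.z1] at hvE
    have h6σx := hΨσx.self.2.2.2.2.2 (-(j + k))
    rw [neg_neg] at h6σx
    have hσσx : σ (σ x) = (2 : ℝ) ^ (-(j + k)) * σ ((2 : ℝ) ^ (j + k) * σ x) := h6σx hvE
    have hσcomp : σ ((2 : ℝ) ^ (j + k) * σ x) = (2 : ℝ) ^ j * ((2 : ℝ) ^ k * x) := by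
      rw [← Stmt0Aux.z1, ← hvT, hut, hfix]
    rw [hσσx, hσcomp, Stmt0Aux.z1, show -(j + k) + j = -k by omega, Stmt0Aux.zinv]
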